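/- Let A, B, C be a triangle, A₁ the point strictly between B and C with ∠BAA₁ = ∠A₁AC, B₁ the point strictly between A and C with ∠ABB₁ = ∠B₁BC, and J a point lying on both segment AA₁ and segment BB₁. If dist J A₁ = dist J B₁ and ∠ACB ≠ π/3, then dist A C = dist B C. -/

import Mathlib

open EuclideanGeometry Real

-- merge two collinear triples sharing two distinct points
lemma coll_merge {p q r s : EuclideanSpace ℝ (Fin 2)}
    (h1 : Collinear ℝ ({p, q, r} : Set _)) (h2 : Collinear ℝ ({p, q, s} : Set _))
    (hpq : p ≠ q) : Collinear ℝ ({p, q, r, s} : Set _) := by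
  have hr : r ∈ line[ℝ, p, q] :=
    h1.mem_affineSpan_of_mem_of_ne (by simp) (by simp) (by simp) hpq
  have hs : s ∈ line[ℝ, p, q] :=
    h2.mem_affineSpan_of_mem_of_ne (by simp) (by simp) (by simp) hpq
  have := collinear_insert_insert_of_mem_affineSpan_pair hr hs
  have hsub : ({p, q, r, s} : Set (EuclideanSpace ℝ (Fin 2))) ⊆ {r, s, p, q} := by
    intro x hx; simp at hx ⊢; tauto
  exact this.subset hsub

-- ray invariance of angle
lemma angle_ray {A X Y : EuclideanSpace ℝ (Fin 2)} (B : EuclideanSpace ℝ (Fin 2))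
    (hX : X ∈ segment ℝ A Y) (hXA : X ≠ A) : ∠ B A X = ∠ B A Y := by
  obtain ⟨u, v, hu, hv, huv, hXeq⟩ := hX
  have hv0 : 0 < v := by
    rcases hv.eq_or_lt with h | h
    · exfalso
      apply hXA
      rw [← hXeq, ← h]
      simp [show u = 1 by linarith]
    · exact h
  have hvec : X -ᵥ A = v • (Y -ᵥ A) := by
    have hu' : u = 1 - v := by linarith
    rw [← hXeq, hu']
    simp only [vsub_eq_sub, smul_sub]
    module
  show InnerProductGeometry.angle (B -ᵥ A) (X -ᵥ A) = InnerProductGeometry.angle (B -ᵥ A) (Y -ᵥ A)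
  rw [hvec, InnerProductGeometry.angle_smul_right_of_pos _ _ hv0]

lemma angle_ray' {A X Y : EuclideanSpace ℝ (Fin 2)} (B : EuclideanSpace ℝ (Fin 2))
    (hX : X ∈ segment ℝ A Y) (hXA : X ≠ A) : ∠ X A B = ∠ Y A B := by
  rw [angle_comm, angle_ray B hX hXA, angle_comm]

-- law of sines
lemma law_sin (p1 p2 p3 : EuclideanSpace ℝ (Fin 2)) :
    Real.sin (∠ p2 p1 p3) * (dist p1 p2 * dist p1 p3)
      = Real.sin (∠ p1 p2 p3) * (dist p2 p1 * dist p2 p3) := by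
  have h1 := InnerProductGeometry.sin_angle_mul_norm_mul_norm (p2 -ᵥ p1) (p3 -ᵥ p1)
  have h2 := InnerProductGeometry.sin_angle_mul_norm_mul_norm (p1 -ᵥ p2) (p3 -ᵥ p2)
  have e : (inner ℝ (p1 -ᵥ p2) (p1 -ᵥ p2) : ℝ) * inner ℝ (p3 -ᵥ p2) (p3 -ᵥ p2)
      - inner ℝ (p1 -ᵥ p2) (p3 -ᵥ p2) * inner ℝ (p1 -ᵥ p2) (p3 -ᵥ p2)
      = (inner ℝ (p2 -ᵥ p1) (p2 -ᵥ p1) : ℝ) * inner ℝ (p3 -ᵥ p1) (p3 -ᵥ p1)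
      - inner ℝ (p2 -ᵥ p1) (p3 -ᵥ p1) * inner ℝ (p2 -ᵥ p1) (p3 -ᵥ p1) := by
    have hx : p1 -ᵥ p2 = -(p2 -ᵥ p1) := (neg_vsub_eq_vsub_rev p2 p1).symm
    have hy : p3 -ᵥ p2 = (p3 -ᵥ p1) - (p2 -ᵥ p1) := (vsub_sub_vsub_cancel_right p3 p2 p1).symm
    rw [hx, hy]
    simp only [inner_neg_left, inner_neg_right, inner_sub_left, inner_sub_right,
      real_inner_comm (p3 -ᵥ p1) (p2 -ᵥ p1)]
    ring
  have n : ∀ a b : EuclideanSpace ℝ (Fin 2), ‖a -ᵥ b‖ = ‖b -ᵥ a‖ := fun a b => by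
    rw [← neg_vsub_eq_vsub_rev, norm_neg]
  unfold EuclideanGeometry.angle
  simp only [dist_eq_norm_vsub (EuclideanSpace ℝ (Fin 2))]
  rw [n p1 p2] at h2
  rw [n p1 p2, n p1 p3, n p2 p3, h1, h2, e]

-- sine equality case analysis
lemma sin_eq_cases {x y : ℝ} (hx0 : 0 ≤ x) (hx1 : x ≤ π) (hy0 : 0 ≤ y) (hy1 : y ≤ π)
    (h : Real.sin x = Real.sin y) : x = y ∨ x + y = π := by
  have hc : Real.cos x ^ 2 = Real.cos y ^ 2 := by
    rw [Real.cos_sq', Real.cos_sq', h]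
  rcases sq_eq_sq_iff_eq_or_eq_neg.mp hc with h' | h'
  · left; exact Real.injOn_cos ⟨hx0, hx1⟩ ⟨hy0, hy1⟩ h'
  · right
    have : Real.cos x = Real.cos (π - y) := by rw [Real.cos_pi_sub]; exact h'
    have := Real.injOn_cos ⟨hx0, hx1⟩ ⟨by linarith, by linarith⟩ this
    linarith

theorem stmt_11 (A B C A₁ B₁ J : EuclideanSpace ℝ (Fin 2))
    (hABC : ¬ Collinear ℝ ({A, B, C} : Set (EuclideanSpace ℝ (Fin 2))))
    (hA₁ : Sbtw ℝ B A₁ C) (hA₁' : ∠ B A A₁ = ∠ A₁ A C)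
    (hB₁ : Sbtw ℝ A B₁ C) (hB₁' : ∠ A B B₁ = ∠ B₁ B C)
    (hJA : J ∈ segment ℝ A A₁) (hJB : J ∈ segment ℝ B B₁)
    (h : dist J A₁ = dist J B₁)
    (h2 : ∠ A C B ≠ π / 3) :
    dist A C = dist B C := by
  have hA'B : A₁ ≠ B := hA₁.ne_left
  have hA'C : A₁ ≠ C := hA₁.ne_right
  have hB'A : B₁ ≠ A := hB₁.ne_left
  have hB'C : B₁ ≠ C := hB₁.ne_right
  have hcA : Collinear ℝ ({B, A₁, C} : Set _) := hA₁.wbtw.collinear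
  have hcB : Collinear ℝ ({A, B₁, C} : Set _) := hB₁.wbtw.collinear
  have hAB : A ≠ B := by
    rintro rfl
    exact hABC ((collinear_pair ℝ A C).subset (by intro x hx; simp at hx ⊢; tauto))
  have hAC : A ≠ C := by
    rintro rfl
    exact hABC ((collinear_pair ℝ A B).subset (by intro x hx; simp at hx ⊢; tauto))
  have hBC : B ≠ C := by
    rintro rfl
    exact hABC ((collinear_pair ℝ A B).subset (by intro x hx; simp at hx ⊢; tauto))
  have hAA₁ : A ≠ A₁ := by
    rintro rfl
    exact hABC (hcA.subset (by intro x hx; simp at hx ⊢; tauto))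
  have hBB₁ : B ≠ B₁ := by
    rintro rfl
    exact hABC (hcB.subset (by intro x hx; simp at hx ⊢; tauto))
  have hJA' : J ≠ A := by
    rintro rfl
    have h1 : Collinear ℝ ({B, J, B₁} : Set _) := (mem_segment_iff_wbtw.mp hJB).collinear
    refine hABC (collinear_triple_of_mem_affineSpan_pair (p₄ := J) (p₅ := B₁) ?_ ?_ ?_)
    · exact left_mem_affineSpan_pair ℝ J B₁
    · exact h1.mem_affineSpan_of_mem_of_ne (by simp) (by simp) (by simp) hB'A.symm
    · exact hcB.mem_affineSpan_of_mem_of_ne (by simp) (by simp) (by simp) hB'A.symm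
  have hJB' : J ≠ B := by
    rintro rfl
    have h1 : Collinear ℝ ({A, J, A₁} : Set _) := (mem_segment_iff_wbtw.mp hJA).collinear
    refine hABC (collinear_triple_of_mem_affineSpan_pair (p₄ := J) (p₅ := A₁) ?_ ?_ ?_)
    · exact h1.mem_affineSpan_of_mem_of_ne (by simp) (by simp) (by simp) hA'B.symm
    · exact left_mem_affineSpan_pair ℝ J A₁
    · exact hcA.mem_affineSpan_of_mem_of_ne (by simp) (by simp) (by simp) hA'B.symm
  have hJA₁ : J ≠ A₁ := by
    rintro rfl
    have h1 : Collinear ℝ ({B, J, B₁} : Set _) := (mem_segment_iff_wbtw.mp hJB).collinear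
    have hBB₁C : Collinear ℝ ({B₁, C, B} : Set _) :=
      collinear_triple_of_mem_affineSpan_pair (p₄ := B) (p₅ := J)
        (h1.mem_affineSpan_of_mem_of_ne (by simp) (by simp) (by simp) hA'B.symm)
        (hcA.mem_affineSpan_of_mem_of_ne (by simp) (by simp) (by simp) hA'B.symm)
        (left_mem_affineSpan_pair ℝ B J)
    refine hABC (collinear_triple_of_mem_affineSpan_pair (p₄ := B₁) (p₅ := C) ?_ ?_ ?_)
    · exact hcB.mem_affineSpan_of_mem_of_ne (by simp) (by simp) (by simp) hB'C
    · exact hBB₁C.mem_affineSpan_of_mem_of_ne (by simp) (by simp) (by simp) hB'C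
    · exact right_mem_affineSpan_pair ℝ B₁ C
  have hJB₁ : J ≠ B₁ := by
    rintro rfl
    have h1 : Collinear ℝ ({A, J, A₁} : Set _) := (mem_segment_iff_wbtw.mp hJA).collinear
    have hAA₁C : Collinear ℝ ({A₁, C, A} : Set _) :=
      collinear_triple_of_mem_affineSpan_pair (p₄ := A) (p₅ := J)
        (h1.mem_affineSpan_of_mem_of_ne (by simp) (by simp) (by simp) hB'A.symm)
        (hcB.mem_affineSpan_of_mem_of_ne (by simp) (by simp) (by simp) hB'A.symm)
        (left_mem_affineSpan_pair ℝ A J)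
    refine hABC (collinear_triple_of_mem_affineSpan_pair (p₄ := A₁) (p₅ := C) ?_ ?_ ?_)
    · exact hAA₁C.mem_affineSpan_of_mem_of_ne (by simp) (by simp) (by simp) hA'C
    · exact hcA.mem_affineSpan_of_mem_of_ne (by simp) (by simp) (by simp) hA'C
    · exact right_mem_affineSpan_pair ℝ A₁ C
  -- segment memberships
  have hsA₁BC : A₁ ∈ segment ℝ B C := hA₁.wbtw.mem_segment
  have hsA₁CB : A₁ ∈ segment ℝ C B := hA₁.wbtw.symm.mem_segment
  have hsB₁AC : B₁ ∈ segment ℝ A C := hB₁.wbtw.mem_segment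
  have hsB₁CA : B₁ ∈ segment ℝ C A := hB₁.wbtw.symm.mem_segment
  have hsJA₁A : J ∈ segment ℝ A₁ A := (mem_segment_iff_wbtw.mp hJA).symm.mem_segment
  have hsJB₁B : J ∈ segment ℝ B₁ B := (mem_segment_iff_wbtw.mp hJB).symm.mem_segment
  -- triangle angle sums
  have T1 : ∠ A₁ A B + ∠ A B A₁ + ∠ B A₁ A = π :=
    angle_add_angle_add_angle_eq_pi B hAA₁
  rw [angle_comm A₁ A B, angle_ray A hsA₁BC hA'B, angle_comm B A₁ A] at T1
  have T2 : ∠ A A₁ C + ∠ A₁ C A + ∠ C A A₁ = π :=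
    angle_add_angle_add_angle_eq_pi C hAA₁.symm
  rw [angle_comm A₁ C A, angle_ray A hsA₁CB hA'C, angle_comm C A A₁, ← hA₁'] at T2
  have sup1 : ∠ A A₁ B + ∠ A A₁ C = π :=
    angle_add_angle_eq_pi_of_angle_eq_pi A hA₁.angle₁₂₃_eq_pi
  have F1 : ∠ A A₁ B = ∠ B A A₁ + ∠ A C B := by linarith
  have F2 : ∠ A B C = π - 2 * ∠ B A A₁ - ∠ A C B := by linarith
  have T3 : ∠ B₁ B A + ∠ B A B₁ + ∠ A B₁ B = π :=
    angle_add_angle_add_angle_eq_pi A hBB₁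
  rw [angle_comm B₁ B A, angle_ray B hsB₁AC hB'A, angle_comm A B₁ B] at T3
  have T4 : ∠ B B₁ C + ∠ B₁ C B + ∠ C B B₁ = π :=
    angle_add_angle_add_angle_eq_pi C hBB₁.symm
  rw [angle_comm B₁ C B, angle_ray B hsB₁CA hB'C, angle_comm B C A, angle_comm C B B₁,
    ← hB₁'] at T4
  have sup2 : ∠ B B₁ A + ∠ B B₁ C = π :=
    angle_add_angle_eq_pi_of_angle_eq_pi B hB₁.angle₁₂₃_eq_pi
  have F3 : ∠ B B₁ A = ∠ A B B₁ + ∠ A C B := by linarith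
  have F4 : ∠ B A C = π - 2 * ∠ A B B₁ - ∠ A C B := by linarith
  have T5 : ∠ C A B + ∠ A B C + ∠ B C A = π :=
    angle_add_angle_add_angle_eq_pi B hAC
  rw [angle_comm C A B, angle_comm B C A] at T5
  have F5 : 2 * ∠ B A A₁ + 2 * ∠ A B B₁ + ∠ A C B = π := by linarith
  -- angle views
  have hv1 : ∠ B A₁ J = ∠ B A A₁ + ∠ A C B :=
    (angle_ray B hsJA₁A hJA₁).trans ((angle_comm B A₁ A).trans F1)
  have hv2 : ∠ A₁ B J = ∠ A B B₁ :=
    (angle_ray A₁ hJB hJB').trans ((angle_comm A₁ B B₁).trans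
      ((angle_ray B₁ hsA₁BC hA'B).trans hB₁'.symm))
  have hv3 : ∠ A B₁ J = ∠ A B B₁ + ∠ A C B :=
    (angle_ray A hsJB₁B hJB₁).trans ((angle_comm A B₁ B).trans F3)
  have hv4 : ∠ B₁ A J = ∠ B A A₁ :=
    (angle_comm B₁ A J).trans ((angle_ray J hsB₁AC hB'A).trans ((angle_comm J A C).trans
      ((angle_ray C hJA hJA').trans ((angle_comm C A A₁).trans hA₁'.symm))))
  have hv5 : ∠ B A J = ∠ B A A₁ := angle_ray B hJA hJA'
  have hv6 : ∠ A B J = ∠ A B B₁ := angle_ray A hJB hJB'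
  -- law of sines
  have E1 := _root_.law_sin A₁ B J
  rw [hv1, hv2, dist_comm A₁ B] at E1
  have E1' : Real.sin (∠ B A A₁ + ∠ A C B) * dist A₁ J = Real.sin (∠ A B B₁) * dist B J :=
    mul_left_cancel₀ (dist_ne_zero.mpr hA'B.symm) (by linear_combination E1)
  have E2 := _root_.law_sin B₁ A J
  rw [hv3, hv4, dist_comm B₁ A] at E2
  have E2' : Real.sin (∠ A B B₁ + ∠ A C B) * dist B₁ J = Real.sin (∠ B A A₁) * dist A J :=
    mul_left_cancel₀ (dist_ne_zero.mpr hB'A.symm) (by linear_combination E2)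
  have E3 := _root_.law_sin A B J
  rw [hv5, hv6, dist_comm A B] at E3
  have E3' : Real.sin (∠ B A A₁) * dist A J = Real.sin (∠ A B B₁) * dist B J :=
    mul_left_cancel₀ (dist_ne_zero.mpr hAB.symm) (by linear_combination E3)
  have hd : dist B₁ J = dist A₁ J := by rw [dist_comm A₁ J, dist_comm B₁ J]; exact h.symm
  rw [hd] at E2'
  have key2 : Real.sin (∠ B A A₁ + ∠ A C B) * dist A₁ J
      = Real.sin (∠ A B B₁ + ∠ A C B) * dist A₁ J :=
    E1'.trans (E3'.symm.trans E2'.symm)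
  have key : Real.sin (∠ B A A₁ + ∠ A C B) = Real.sin (∠ A B B₁ + ∠ A C B) :=
    mul_right_cancel₀ (dist_ne_zero.mpr hJA₁.symm) key2
  -- bounds
  have p1 : 0 ≤ ∠ B A A₁ + ∠ A C B := F1 ▸ angle_nonneg A A₁ B
  have p2 : ∠ B A A₁ + ∠ A C B ≤ π := F1 ▸ angle_le_pi A A₁ B
  have p3 : 0 ≤ ∠ A B B₁ + ∠ A C B := F3 ▸ angle_nonneg B B₁ A
  have p4 : ∠ A B B₁ + ∠ A C B ≤ π := F3 ▸ angle_le_pi B B₁ A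
  rcases sin_eq_cases p1 p2 p3 p4 key with hcase | hcase
  · -- a = b, isosceles
    have hang : ∠ C A B = ∠ C B A := by
      rw [angle_comm C A B, angle_comm C B A]; linarith
    have hCpi : ∠ A C B ≠ π := by
      intro hp
      exact hABC ((collinear_of_angle_eq_pi hp).subset (by intro x hx; simp at hx ⊢; tauto))
    have := dist_eq_of_angle_eq_angle_of_angle_ne_pi hang hCpi
    rw [dist_comm A C, dist_comm B C]
    exact this
  · exact absurd (by linarith : ∠ A C B = π / 3) h2
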